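/- The function φ(p) = ⌊1/p⌋·p² + (1 - ⌊1/p⌋·p)² is continuous on (0,1] and strictly increasing, with range (0,1]; hence for each Δ ∈ (0, 1/4] there is a unique p ∈ (0,1] with φ(p) = 4Δ. -/
import Mathlib


/-- The function `φ(p) = ⌊1/p⌋·p² + (1 - ⌊1/p⌋·p)²`. -/
noncomputable def phiUnif (p : ℝ) : ℝ :=
  (⌊1 / p⌋₊ : ℝ) * p ^ 2 + (1 - (⌊1 / p⌋₊ : ℝ) * p) ^ 2


open Set

noncomputable def fAux (n : ℕ) (t : ℝ) : ℝ := (n : ℝ) * t ^ 2 + (1 - (n : ℝ) * t) ^ 2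

lemma fAux_mono {n : ℕ} (hn : 1 ≤ n) {s t : ℝ} (hs : 1 / ((n : ℝ) + 1) ≤ s) (hst : s < t) :
    fAux n s < fAux n t := by
  have hn' : (1 : ℝ) ≤ n := by exact_mod_cast hn
  have h1 : (0 : ℝ) < (n : ℝ) + 1 := by linarith
  have hs' : 1 ≤ ((n : ℝ) + 1) * s := by
    rw [div_le_iff₀ h1] at hs; linarith [hs]
  have hd : 0 < t - s := sub_pos.mpr hst
  unfold fAux
  have hnpos : (0:ℝ) < n := lt_of_lt_of_le one_pos hn'
  nlinarith [mul_pos (mul_pos hnpos h1) (mul_pos hd hd), mul_nonneg (mul_nonneg hnpos.le hd.le) (sub_nonneg.mpr hs')]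

lemma fAux_inv {n : ℕ} (hn : 1 ≤ n) : fAux n (1 / (n : ℝ)) = 1 / (n : ℝ) := by
  have hn' : (0 : ℝ) < n := by exact_mod_cast hn
  unfold fAux; field_simp; ring

lemma fAux_inv' (n : ℕ) : fAux n (1 / ((n : ℝ) + 1)) = 1 / ((n : ℝ) + 1) := by
  have hn' : (0 : ℝ) < (n : ℝ) + 1 := by positivity
  unfold fAux; field_simp; ring

lemma floor_bounds {p : ℝ} (hp : p ∈ Ioc (0:ℝ) 1) :
    1 ≤ ⌊1 / p⌋₊ ∧ 1 / ((⌊1 / p⌋₊ : ℝ) + 1) < p ∧ p ≤ 1 / (⌊1 / p⌋₊ : ℝ) := by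
  obtain ⟨hp0, hp1⟩ := hp
  have h1 : (1 : ℝ) ≤ 1 / p := by rw [le_div_iff₀ hp0]; linarith
  have hfl : 1 ≤ ⌊1 / p⌋₊ := Nat.le_floor (by exact_mod_cast h1)
  have hfl' : (0:ℝ) < (⌊1 / p⌋₊ : ℝ) := by exact_mod_cast hfl
  have hle : (⌊1 / p⌋₊ : ℝ) ≤ 1 / p := Nat.floor_le (by positivity)
  have hlt : 1 / p < (⌊1 / p⌋₊ : ℝ) + 1 := by
    have := Nat.lt_floor_add_one (1 / p); push_cast at this ⊢; linarith
  refine ⟨hfl, ?_, ?_⟩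
  · rw [div_lt_iff₀ (by positivity)]
    rw [div_lt_iff₀ hp0] at hlt; linarith
  · rw [le_div_iff₀ hfl']
    rw [le_div_iff₀ hp0] at hle; linarith

lemma floor_eq_of {n : ℕ} (hn : 1 ≤ n) {p : ℝ} (h1 : 1 / ((n : ℝ) + 1) < p) (h2 : p ≤ 1 / (n : ℝ)) :
    ⌊1 / p⌋₊ = n := by
  have hn' : (0 : ℝ) < n := by exact_mod_cast hn
  have hp0 : 0 < p := lt_trans (by positivity) h1
  rw [Nat.floor_eq_iff (by positivity)]
  constructor
  · rw [le_div_iff₀ hp0]; rw [le_div_iff₀ hn'] at h2; linarith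
  · rw [div_lt_iff₀ hp0]; push_cast; rw [div_lt_iff₀ (by positivity : (0:ℝ) < (n:ℝ)+1)] at h1; linarith

lemma phiUnif_eq (p : ℝ) : phiUnif p = fAux ⌊1 / p⌋₊ p := rfl

lemma phiUnif_inv {n : ℕ} (hn : 1 ≤ n) : phiUnif (1 / (n : ℝ)) = 1 / (n : ℝ) := by
  have hn' : (0 : ℝ) < n := by exact_mod_cast hn
  rw [phiUnif_eq, one_div_one_div, Nat.floor_natCast, fAux_inv hn]

lemma phiUnif_strictMonoOn : StrictMonoOn phiUnif (Ioc (0:ℝ) 1) := by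
  intro p hp q hq hpq
  obtain ⟨hm1, hm2, hm3⟩ := floor_bounds hp
  obtain ⟨hn1, hn2, hn3⟩ := floor_bounds hq
  set m := ⌊1 / p⌋₊ with hm
  set n := ⌊1 / q⌋₊ with hn
  have hnm : n ≤ m := by
    apply Nat.floor_le_floor
    exact one_div_le_one_div_of_le hp.1 hpq.le
  rcases eq_or_lt_of_le hnm with heq | hlt
  · rw [phiUnif_eq p, phiUnif_eq q, ← hm, ← hn, ← heq]
    exact fAux_mono hn1 (by rw [heq]; exact hm2.le) hpq
  · have h1 : phiUnif p ≤ 1 / (m : ℝ) := by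
      rcases lt_or_eq_of_le hm3 with h | h
      · rw [phiUnif_eq p, ← hm, ← fAux_inv hm1]
        exact (fAux_mono hm1 hm2.le h).le
      · rw [h, phiUnif_inv hm1]
    have h2 : (1 : ℝ) / m ≤ 1 / ((n : ℝ) + 1) := by
      apply one_div_le_one_div_of_le (by positivity)
      exact_mod_cast hlt
    have h3 : 1 / ((n : ℝ) + 1) < phiUnif q := by
      rw [phiUnif_eq q, ← hn, ← fAux_inv' n]
      exact fAux_mono hn1 le_rfl hn2
    linarith

lemma phiUnif_mem {p : ℝ} (hp : p ∈ Ioc (0:ℝ) 1) : phiUnif p ∈ Ioc (0:ℝ) 1 := by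
  obtain ⟨hm1, hm2, hm3⟩ := floor_bounds hp
  set m := ⌊1 / p⌋₊
  have hm' : (1:ℝ) ≤ m := by exact_mod_cast hm1
  have h1 : phiUnif p ≤ 1 / (m : ℝ) := by
    rcases lt_or_eq_of_le hm3 with h | h
    · rw [phiUnif_eq p, ← fAux_inv hm1]
      exact (fAux_mono hm1 hm2.le h).le
    · rw [h, phiUnif_inv hm1]
  have h2 : 1 / ((m : ℝ) + 1) < phiUnif p := by
    rw [phiUnif_eq p, ← fAux_inv' m]
    exact fAux_mono hm1 le_rfl hm2
  constructor
  · have : (0:ℝ) < 1 / ((m:ℝ)+1) := by positivity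
    linarith
  · have : (1:ℝ) / m ≤ 1 := by rw [div_le_one (by linarith)]; linarith
    linarith

lemma fAux_continuous (n : ℕ) : Continuous (fAux n) := by
  unfold fAux; continuity

lemma phiUnif_continuousOn : ContinuousOn phiUnif (Ioc (0:ℝ) 1) := by
  intro p0 hp0
  obtain ⟨hm1, hm2, hm3⟩ := floor_bounds hp0
  set n := ⌊1 / p0⌋₊ with hn
  have hn' : (0:ℝ) < n := by exact_mod_cast hm1
  rcases lt_or_eq_of_le hm3 with hlt | heq
  -- interior of a piece: locally equal to fAux n
  · apply ContinuousAt.continuousWithinAt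
    apply ((fAux_continuous n).continuousAt).congr
    apply Filter.eventuallyEq_of_mem (Ioo_mem_nhds hm2 hlt)
    intro y hy
    rw [phiUnif_eq, floor_eq_of hm1 hy.1 hy.2.le]
  -- boundary point p0 = 1/n
  · have hsub : Ioc (0:ℝ) 1 ⊆ Iic p0 ∪ (Ioc (0:ℝ) 1 ∩ Ioi p0) := by
      intro y hy
      rcases le_or_gt y p0 with h | h
      · exact Or.inl h
      · exact Or.inr ⟨hy, h⟩
    apply ContinuousWithinAt.mono _ hsub
    apply ContinuousWithinAt.union
    -- left part
    · apply ContinuousWithinAt.mono_of_mem_nhdsWithin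
        (t := Ioc (1 / ((n:ℝ)+1)) p0)
      · apply ((fAux_continuous n).continuousWithinAt).congr
        · intro y hy
          rw [phiUnif_eq, floor_eq_of hm1 hy.1 (hy.2.trans hm3)]
        · rw [phiUnif_eq, ← hn]
      · rw [mem_nhdsWithin]
        exact ⟨Ioi (1 / ((n:ℝ)+1)), isOpen_Ioi, hm2,
          fun y hy => ⟨hy.1, hy.2⟩⟩
    -- right part
    · rcases eq_or_lt_of_le hm1 with h1 | h1
      · -- n = 1, p0 = 1, right set empty
        have he : Ioc (0:ℝ) 1 ∩ Ioi p0 = ∅ := by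
          have : p0 = 1 := by rw [heq, ← h1]; norm_num
          rw [this]
          ext y; simp only [mem_inter_iff, mem_Ioc, mem_Ioi, mem_empty_iff_false, iff_false]
          rintro ⟨⟨_, h2⟩, h3⟩; linarith
        rw [he]
        rw [ContinuousWithinAt, nhdsWithin_empty]
        exact Filter.tendsto_bot
      · -- n ≥ 2
        obtain ⟨k, hk⟩ : ∃ k, n = k + 1 := ⟨n - 1, by omega⟩
        have hk1 : 1 ≤ k := by omega
        have hk' : (0:ℝ) < k := by exact_mod_cast hk1
        have hncast : (n:ℝ) = (k:ℝ) + 1 := by rw [hk]; push_cast; ring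
        have hp0eq : p0 = 1 / ((k:ℝ) + 1) := by rw [heq, hncast]
        have hkk : 1 / ((k:ℝ) + 1) < 1 / (k:ℝ) :=
          one_div_lt_one_div_of_lt hk' (by linarith)
        have hval : phiUnif p0 = 1 / ((k:ℝ) + 1) := by
          have h2 : phiUnif (1 / ((k+1 : ℕ):ℝ)) = 1 / ((k+1 : ℕ):ℝ) :=
            phiUnif_inv (by omega)
          rw [hp0eq]
          push_cast at h2
          exact h2
        apply ContinuousWithinAt.mono_of_mem_nhdsWithin
          (t := Ioo (1 / ((k:ℝ)+1)) (1 / (k:ℝ)))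
        · apply ((fAux_continuous k).continuousWithinAt).congr
          · intro y hy
            rw [phiUnif_eq, floor_eq_of hk1 hy.1 hy.2.le]
          · rw [hval, hp0eq, fAux_inv' k]
        · rw [mem_nhdsWithin]
          refine ⟨Iio (1 / (k:ℝ)), isOpen_Iio, by rw [hp0eq]; exact hkk, ?_⟩
          rintro y ⟨hy1, ⟨_, hy3⟩⟩
          exact ⟨by rw [hp0eq] at hy3; exact hy3, hy1⟩

lemma phiUnif_image : phiUnif '' Ioc (0:ℝ) 1 = Ioc (0:ℝ) 1 := by
  apply Subset.antisymm
  · rintro y ⟨p, hp, rfl⟩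
    exact phiUnif_mem hp
  · intro y hy
    obtain ⟨hn1, hn2, hn3⟩ := floor_bounds hy
    set n := ⌊1 / y⌋₊ with hn
    have hn' : (0:ℝ) < n := by exact_mod_cast hn1
    have hab : 1 / ((n:ℝ)+1) ≤ 1 / (n:ℝ) :=
      (one_div_lt_one_div_of_lt hn' (by linarith)).le
    have hsub : Icc (1 / ((n:ℝ)+1)) (1 / (n:ℝ)) ⊆ Ioc (0:ℝ) 1 := by
      intro z hz
      constructor
      · exact lt_of_lt_of_le (by positivity) hz.1
      · exact hz.2.trans (by rw [div_le_one hn']; exact_mod_cast hn1)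
    have hcont := phiUnif_continuousOn.mono hsub
    have hiv := intermediate_value_Ioc hab hcont
    have ha : phiUnif (1 / ((n:ℝ)+1)) = 1 / ((n:ℝ)+1) := by
      have := phiUnif_inv (n := n + 1) (by omega)
      push_cast at this
      exact this
    have hb : phiUnif (1 / (n:ℝ)) = 1 / (n:ℝ) := phiUnif_inv hn1
    rw [ha, hb] at hiv
    obtain ⟨p, hp, hpy⟩ := hiv ⟨hn2, hn3⟩
    exact ⟨p, hsub (Ioc_subset_Icc_self hp), hpy⟩

/-- `φ` is continuous and strictly increasing on `(0,1]`, with range `(0,1]`; hence for each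
`Δ ∈ (0,1/4]` there is a unique `p ∈ (0,1]` with `φ(p) = 4Δ`. -/
theorem stmt3 :
    ContinuousOn phiUnif (Set.Ioc 0 1) ∧
    StrictMonoOn phiUnif (Set.Ioc 0 1) ∧
    phiUnif '' Set.Ioc 0 1 = Set.Ioc 0 1 ∧
    ∀ Δ ∈ Set.Ioc (0 : ℝ) (1 / 4), ∃! p, p ∈ Set.Ioc (0 : ℝ) 1 ∧ phiUnif p = 4 * Δ := by
  refine ⟨phiUnif_continuousOn, phiUnif_strictMonoOn, phiUnif_image, ?_⟩
  intro Δ hΔ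
  have h4 : 4 * Δ ∈ Ioc (0:ℝ) 1 := ⟨by linarith [hΔ.1], by linarith [hΔ.2]⟩
  obtain ⟨p, hp, hpe⟩ : 4 * Δ ∈ phiUnif '' Ioc (0:ℝ) 1 := by rw [phiUnif_image]; exact h4
  refine ⟨p, ⟨hp, hpe⟩, ?_⟩
  rintro q ⟨hq, hqe⟩
  exact phiUnif_strictMonoOn.injOn hq hp (by rw [hqe, hpe])
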